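/- Let b and c be vectors in ℝ², let s, t ≥ 0 be real numbers, and set a = s • b + t • c. Suppose that ‖a‖ ≤ ‖p‖ for every point p of the segment [b, c]. Then a lies in the convex hull of {0, b, c}. -/
import Mathlib


/-- Membership step in the proof of Proposition 3.7: a point of the cone spanned by
`b` and `c` whose norm does not exceed the norm of every point of the segment
`[b, c]` lies in the triangle with vertices `0`, `b`, `c`. -/
theorem mem_triangle_of_norm_le
    (b c : EuclideanSpace ℝ (Fin 2)) (s t : ℝ) (hs : 0 ≤ s) (ht : 0 ≤ t)
    (a : EuclideanSpace ℝ (Fin 2)) (ha : a = s • b + t • c)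
    (hle : ∀ p ∈ segment ℝ b c, ‖a‖ ≤ ‖p‖) :
    a ∈ convexHull ℝ ({0, b, c} : Set (EuclideanSpace ℝ (Fin 2))) := by
  have hσ0 : 0 ≤ s + t := add_nonneg hs ht
  have h0mem : (0 : EuclideanSpace ℝ (Fin 2)) ∈
      convexHull ℝ ({0, b, c} : Set (EuclideanSpace ℝ (Fin 2))) :=
    subset_convexHull ℝ _ (by simp)
  rcases eq_or_lt_of_le hσ0 with h0 | h0
  · have hs0 : s = 0 := by linarith
    have ht0 : t = 0 := by linarith
    have : a = 0 := by simp [ha, hs0, ht0]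
    rw [this]; exact h0mem
  · set p := (s / (s + t)) • b + (t / (s + t)) • c with hp
    have hσne : s + t ≠ 0 := ne_of_gt h0
    have hpseg : p ∈ segment ℝ b c := by
      refine ⟨s / (s + t), t / (s + t), div_nonneg hs hσ0, div_nonneg ht hσ0, ?_, rfl⟩
      field_simp
    have hap : a = (s + t) • p := by
      rw [ha, hp, smul_add, smul_smul, smul_smul]
      field_simp
    have hpmem : p ∈ convexHull ℝ ({0, b, c} : Set (EuclideanSpace ℝ (Fin 2))) := by
      have h1 : segment ℝ b c = convexHull ℝ ({b, c} : Set (EuclideanSpace ℝ (Fin 2))) :=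
        (convexHull_pair b c).symm
      have h2 : ({b, c} : Set (EuclideanSpace ℝ (Fin 2))) ⊆ {0, b, c} := by
        intro x hx; rcases hx with h | h <;> simp [h]
      exact convexHull_mono h2 (h1 ▸ hpseg)
    by_cases h1 : s + t ≤ 1
    · have : a = (s + t) • p + (1 - (s + t)) • (0 : EuclideanSpace ℝ (Fin 2)) := by
        rw [hap, smul_zero, add_zero]
      rw [this]
      exact (convex_convexHull ℝ _) hpmem h0mem hσ0 (by linarith) (by ring)
    · push_neg at h1
      have hna : ‖a‖ = (s + t) * ‖p‖ := by
        rw [hap, norm_smul, Real.norm_eq_abs, abs_of_pos h0]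
      have hle' := hle p hpseg
      have hpn : ‖p‖ = 0 := by nlinarith [norm_nonneg p]
      have hp0 : p = 0 := norm_eq_zero.mp hpn
      have : a = 0 := by rw [hap, hp0, smul_zero]
      rw [this]; exact h0mem
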